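/- For every integer k ≥ 9, setting n = 2^k - 2^{k-2} - 2^{k-3} - 4, each of the four consecutive integers n, n+1, n+2, n+3 satisfies B(m) = B(m^2). Hence there are infinitely many 4-tuples of consecutive integers all of which are (2,1,2)-numbers. -/

import Mathlib

def B (n : ℕ) : ℕ := (Nat.digits 2 n).sum

lemma B_rec (n : ℕ) : B n = n % 2 + B (n / 2) := by
  rcases Nat.eq_zero_or_pos n with h | h
  · simp [h, B]
  · unfold B
    rw [Nat.digits_def' (by norm_num) h]
    simp

lemma Bs (a b e : ℕ) (h : a < 2 ^ e) : B (a + 2 ^ e * b) = B a + B b := by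
  induction e generalizing a b with
  | zero =>
    interval_cases a
    simp [B]
  | succ e ih =>
    rcases Nat.eq_zero_or_pos b with rfl | hb
    · simp [B]
    · have h2 : (0:ℕ) < 2 ^ e := pow_pos (by norm_num) e
      have hpow : (2:ℕ) ^ (e+1) * b = 2 * (2 ^ e * b) := by ring
      rw [B_rec (a + 2 ^ (e+1) * b), B_rec a]
      have h1 : (a + 2 ^ (e+1) * b) % 2 = a % 2 := by omega
      have hq : (a + 2 ^ (e+1) * b) / 2 = a / 2 + 2 ^ e * b := by omega
      rw [h1, hq, ih _ _ (by omega)]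
      omega

lemma Bo (n : ℕ) : B (2 ^ n - 1) = n := by
  induction n with
  | zero => simp [B]
  | succ n ih =>
    have h2 : (0:ℕ) < 2 ^ n := pow_pos (by norm_num) n
    have e : 2 ^ (n+1) - 1 = 1 + 2 ^ 1 * (2 ^ n - 1) := by
      have : (2:ℕ) ^ (n+1) = 2 * 2 ^ n := by ring
      omega
    rw [e, Bs _ _ _ (by norm_num), ih]
    simp [B]
    omega

lemma key (c m : ℕ) (h1 : 320 * 2 ^ c - 4 ≤ m) (h2 : m ≤ 320 * 2 ^ c - 1) :
    B m = B (m ^ 2) := by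
  obtain ⟨s, hs⟩ : ∃ s, 2 ^ c = s + 1 :=
    ⟨2 ^ c - 1, by have := pow_pos (show 0 < 2 by norm_num) c; omega⟩
  have hp : ∀ d, (2:ℕ) ^ (c + d) = 2 ^ d * (s + 1) := fun d => by
    rw [pow_add, hs]; ring
  have hsc : s = 2 ^ c - 1 := by omega
  have hm : m = 320*s+316 ∨ m = 320*s+317 ∨ m = 320*s+318 ∨ m = 320*s+319 := by omega
  rcases hm with rfl | rfl | rfl | rfl
  · have hBm : B (320*s+316) = c + 5 := by
      rw [show 320*s+316 = (64*s+60) + 2^(c+8) * 1 by rw [hp 8]; ring_nf <;> omega,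
        Bs (64*s+60) 1 (c+8) (by rw [hp 8]; omega),
        show 64*s+60 = 0 + 2^2 * (16*s+15) by omega,
        Bs 0 (16*s+15) 2 (by norm_num),
        show 16*s+15 = 2^(c+4) - 1 by rw [hp 4]; omega, Bo]
      simp [B] <;> omega
    have hB2 : B ((320*s+316)^2) = c + 5 := by
      rw [show (320*s+316)^2 = 16 + 2^(c+9) * ((8*s+3) + 2^(c+3)*24) by
          rw [hp 9, hp 3]; ring,
        Bs 16 _ (c+9) (by rw [hp 9]; omega),
        Bs (8*s+3) 24 (c+3) (by rw [hp 3]; omega),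
        show 8*s+3 = 3 + 2^3 * s by omega,
        Bs 3 s 3 (by norm_num), hsc, Bo]
      simp [B] <;> omega
    omega
  · have hBm : B (320*s+317) = c + 6 := by
      rw [show 320*s+317 = (64*s+61) + 2^(c+8) * 1 by rw [hp 8]; ring_nf <;> omega,
        Bs (64*s+61) 1 (c+8) (by rw [hp 8]; omega),
        show 64*s+61 = 1 + 2^2 * (16*s+15) by omega,
        Bs 1 (16*s+15) 2 (by norm_num),
        show 16*s+15 = 2^(c+4) - 1 by rw [hp 4]; omega, Bo]
      simp [B] <;> omega
    have hB2 : B ((320*s+317)^2) = c + 6 := by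
      rw [show (320*s+317)^2 = 9 + 2^(c+7) * ((32*s+17) + 2^(c+5)*24) by
          rw [hp 7, hp 5]; ring,
        Bs 9 _ (c+7) (by rw [hp 7]; omega),
        Bs (32*s+17) 24 (c+5) (by rw [hp 5]; omega),
        show 32*s+17 = 1 + 2^4 * (2*s+1) by omega,
        Bs 1 (2*s+1) 4 (by norm_num),
        show 2*s+1 = 2^(c+1) - 1 by rw [hp 1]; omega, Bo]
      simp [B] <;> omega
    omega
  · have hBm : B (320*s+318) = c + 6 := by
      rw [show 320*s+318 = (64*s+62) + 2^(c+8) * 1 by rw [hp 8]; ring_nf <;> omega,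
        Bs (64*s+62) 1 (c+8) (by rw [hp 8]; omega),
        show 64*s+62 = 0 + 2^1 * (32*s+31) by omega,
        Bs 0 (32*s+31) 1 (by norm_num),
        show 32*s+31 = 2^(c+5) - 1 by rw [hp 5]; omega, Bo]
      simp [B] <;> omega
    have hB2 : B ((320*s+318)^2) = c + 6 := by
      rw [show (320*s+318)^2 = 4 + 2^(c+8) * ((16*s+11) + 2^(c+4)*24) by
          rw [hp 8, hp 4]; ring,
        Bs 4 _ (c+8) (by rw [hp 8]; omega),
        Bs (16*s+11) 24 (c+4) (by rw [hp 4]; omega),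
        show 16*s+11 = 3 + 2^3 * (2*s+1) by omega,
        Bs 3 (2*s+1) 3 (by norm_num),
        show 2*s+1 = 2^(c+1) - 1 by rw [hp 1]; omega, Bo]
      simp [B] <;> omega
    omega
  · have hBm : B (320*s+319) = c + 7 := by
      rw [show 320*s+319 = (64*s+63) + 2^(c+8) * 1 by rw [hp 8]; ring_nf <;> omega,
        Bs (64*s+63) 1 (c+8) (by rw [hp 8]; omega),
        show 64*s+63 = 2^(c+6) - 1 by rw [hp 6]; omega, Bo]
      simp [B] <;> omega
    have hB2 : B ((320*s+319)^2) = c + 7 := by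
      rw [show (320*s+319)^2 = 1 + 2^(c+7) * ((32*s+27) + 2^(c+5)*24) by
          rw [hp 7, hp 5]; ring,
        Bs 1 _ (c+7) (by rw [hp 7]; omega),
        Bs (32*s+27) 24 (c+5) (by rw [hp 5]; omega),
        show 32*s+27 = 3 + 2^3 * (4*s+3) by omega,
        Bs 3 (4*s+3) 3 (by norm_num),
        show 4*s+3 = 2^(c+2) - 1 by rw [hp 2]; omega, Bo]
      simp [B] <;> omega
    omega

theorem stmt_2 :
    (∀ k : ℕ, 9 ≤ k → ∀ m : ℕ, 2 ^ k - 2 ^ (k - 2) - 2 ^ (k - 3) - 4 ≤ m →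
      m ≤ 2 ^ k - 2 ^ (k - 2) - 2 ^ (k - 3) - 4 + 3 → B m = B (m ^ 2)) ∧
    {n : ℕ | 0 < n ∧ ∀ m : ℕ, n ≤ m → m ≤ n + 3 → B m = B (m ^ 2)}.Infinite := by
  have hne : ∀ k : ℕ, 9 ≤ k → 2 ^ k - 2 ^ (k - 2) - 2 ^ (k - 3) - 4 = 320 * 2 ^ (k - 9) - 4 := by
    intro k hk
    obtain ⟨c, rfl⟩ : ∃ c, k = c + 9 := ⟨k - 9, by omega⟩
    have e1 : (2:ℕ) ^ (c+9) = 512 * 2 ^ c := by rw [pow_add]; ring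
    have e2 : (2:ℕ) ^ (c+9-2) = 128 * 2 ^ c := by
      rw [show c+9-2 = c+7 by omega, pow_add]; ring
    have e3 : (2:ℕ) ^ (c+9-3) = 64 * 2 ^ c := by
      rw [show c+9-3 = c+6 by omega, pow_add]; ring
    rw [e1, e2, e3, show c+9-9 = c by omega]
    have := pow_pos (show 0 < 2 by norm_num) c
    omega
  constructor
  · intro k hk m hm1 hm2
    rw [hne k hk] at hm1 hm2
    have := pow_pos (show 0 < 2 by norm_num) (k-9)
    exact key (k-9) m hm1 (by omega)
  · apply Set.infinite_of_injective_forall_mem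
      (f := fun c : ℕ => 320 * 2 ^ c - 4)
    case hi =>
      intro a b hab
      simp only at hab
      have ha := pow_pos (show 0 < 2 by norm_num) a
      have hb := pow_pos (show 0 < 2 by norm_num) b
      have : (2:ℕ) ^ a = 2 ^ b := by omega
      exact Nat.pow_right_injective (le_refl 2) this
    case hf =>
      intro c
      have hc := pow_pos (show 0 < 2 by norm_num) c
      refine ⟨by omega, fun m hm1 hm2 => key c m hm1 (by omega)⟩
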